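/- For all positive integers n and k: ∑_{m=0}^{min(n,k)} (m!)² S(n+1,m+1) S(k+1,m+1) = ∑_{j=0}^{k} A(k,j) ∑_{m=0}^{k-j} (-1)^m C(k-j, m) (k+1-m)^n. -/

import Mathlib

/-- Stirling numbers of the second kind: `stirling n r` is the number of
partitions of an `n`-element set into `r` non-empty blocks. -/
def stirling : ℕ → ℕ → ℕ
  | 0, 0 => 1
  | 0, _ + 1 => 0
  | _ + 1, 0 => 0
  | n + 1, r + 1 => (r + 1) * stirling n (r + 1) + stirling n r
/-- The descent set of a permutation of `Fin k`: positions `i` (with `i+1 < k`)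
such that `π i > π (i+1)`. -/
def descentSet (k : ℕ) (π : Equiv.Perm (Fin k)) : Finset (Fin (k - 1)) :=
  Finset.univ.filter fun i =>
    π ⟨i.1 + 1, by have := i.isLt; omega⟩ < π ⟨i.1, by have := i.isLt; omega⟩

/-- The Eulerian number `eulerian k j` counts permutations of `{1,…,k}`
with exactly `j - 1` descents (equivalently, `j` ascending runs). -/
def eulerian (k j : ℕ) : ℕ :=
  (Finset.univ.filter fun π : Equiv.Perm (Fin k) =>
    (descentSet k π).card + 1 = j).card

lemma stirling_zero_of_lt : ∀ n r, n < r → stirling n r = 0 := by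
  intro n
  induction n with
  | zero => intro r h; match r, h with | r+1, _ => rfl
  | succ n ih =>
    intro r h
    match r, h with
    | r+1, h =>
      show (r+1) * stirling n (r+1) + stirling n r = 0
      rw [ih (r+1) (by omega), ih r (by omega)]; simp

lemma stirling_succ (n r : ℕ) :
    stirling (n+1) (r+1) = (r + 1) * stirling n (r + 1) + stirling n r := rfl

open Finset in
lemma surj_formula : ∀ n m : ℕ,
    (∑ i ∈ range (m+1), (-1:ℤ)^i * (m.choose i) * ((m - i : ℕ) : ℤ)^n)
      = m.factorial * stirling n m := by
  intro n
  induction n with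
  | zero =>
    intro m
    rcases m with _ | m
    · simp [stirling]
    · have h := Int.alternating_sum_range_choose (n := m+1)
      rw [if_neg (by omega)] at h
      rw [stirling_zero_of_lt 0 (m+1) (by omega)]
      simpa using h
  | succ n ih =>
    intro m
    rcases m with _ | m
    · simp [stirling]
    · have key : ∀ i ∈ range (m+2),
          (-1:ℤ)^i * ((m+1).choose i) * ((m + 1 - i : ℕ) : ℤ)^(n+1)
          = (m+1) * ((-1:ℤ)^i * ((m+1).choose i) * ((m + 1 - i : ℕ) : ℤ)^n)
            - ((-1:ℤ)^i * (i * (m+1).choose i) * ((m + 1 - i : ℕ) : ℤ)^n) := by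
        intro i hi
        simp only [mem_range] at hi
        have h1 : ((m + 1 - i : ℕ) : ℤ) = (m+1 : ℤ) - i := by
          have : i ≤ m + 1 := by omega
          push_cast [this]; ring
        rw [pow_succ, h1]
        push_cast
        ring
      rw [Finset.sum_congr rfl key, Finset.sum_sub_distrib, ← Finset.mul_sum, ih (m+1)]
      have h2 : (∑ i ∈ range (m+2), (-1:ℤ)^i * ((i:ℕ) * (m+1).choose i) * ((m + 1 - i : ℕ) : ℤ)^n)
          = -((m+1) * ((m.factorial : ℤ) * stirling n m)) := by
        rw [Finset.sum_range_succ']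
        simp only [Nat.cast_zero, zero_mul, mul_zero, zero_add, add_zero, Nat.cast_mul]
        have step : ∀ i ∈ range (m+1),
            (-1:ℤ)^(i+1) * (((i+1 : ℕ) : ℤ) * (((m+1).choose (i+1) : ℕ) : ℤ)) * ((m + 1 - (i+1) : ℕ) : ℤ)^n
            = -((m+1) * ((-1:ℤ)^i * (m.choose i) * ((m - i : ℕ) : ℤ)^n)) := by
          intro i hi
          have hc : (i+1) * (m+1).choose (i+1) = (m+1) * m.choose i := by
            rw [mul_comm (i+1), ← Nat.add_one_mul_choose_eq]
          have hcZ : ((i:ℤ)+1) * (((m+1).choose (i+1) : ℕ) : ℤ) = ((m:ℤ)+1) * (m.choose i : ℤ) := by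
            exact_mod_cast congrArg (Nat.cast : ℕ → ℤ) hc
          have h3 : (m + 1 - (i+1) : ℕ) = (m - i : ℕ) := by omega
          rw [h3, pow_succ]
          push_cast
          try linear_combination ((-1:ℤ)^i * (-1) * ((m - i : ℕ) : ℤ)^n) * hcZ
        rw [Finset.sum_congr rfl step, Finset.sum_neg_distrib, ← Finset.mul_sum, ih m]
      rw [h2, stirling_succ, Nat.factorial_succ]
      push_cast
      ring

open Finset in
lemma surj1 (n m : ℕ) :
    ((m.factorial : ℤ)) * stirling (n+1) (m+1)
      = ∑ i ∈ range (m+1), (-1:ℤ)^(m-i) * (m.choose i) * ((i+1 : ℕ) : ℤ)^n := by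
  have h := surj_formula (n+1) (m+1)
  rw [Finset.sum_range_succ] at h
  simp only [Nat.sub_self, Nat.cast_zero, zero_pow (Nat.succ_ne_zero n), mul_zero, add_zero] at h
  rw [← Finset.sum_range_reflect] at h
  have key : ∀ i ∈ range (m+1),
      (-1:ℤ)^(m + 1 - 1 - i) * (((m+1).choose (m + 1 - 1 - i) : ℕ) : ℤ) * ((m + 1 - (m + 1 - 1 - i) : ℕ) : ℤ)^(n+1)
      = ((m:ℤ)+1) * ((-1:ℤ)^(m-i) * (m.choose i) * ((i+1 : ℕ) : ℤ)^n) := by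
    intro i hi
    simp only [mem_range] at hi
    have e1 : m + 1 - 1 - i = m - i := by omega
    have e2 : m + 1 - (m - i) = i + 1 := by omega
    rw [e1, e2]
    have hc : (m+1).choose (m - i) = (m+1).choose (i+1) := by
      rw [← Nat.choose_symm (by omega : i + 1 ≤ m + 1)]
      congr 1
      omega
    have hc2 : (i+1) * (m+1).choose (i+1) = (m+1) * m.choose i := by
      rw [mul_comm (i+1), ← Nat.add_one_mul_choose_eq]
    have hcZ : ((i:ℤ)+1) * (((m+1).choose (i+1) : ℕ) : ℤ) = ((m:ℤ)+1) * (m.choose i : ℤ) := by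
      exact_mod_cast congrArg (Nat.cast : ℕ → ℤ) hc2
    rw [hc, pow_succ]
    push_cast
    linear_combination ((-1:ℤ)^(m-i) * ((i:ℤ)+1)^n) * hcZ
  rw [Finset.sum_congr rfl key, ← Finset.mul_sum, Nat.factorial_succ] at h
  have hne : ((m:ℤ)+1) ≠ 0 := by positivity
  apply mul_left_cancel₀ hne
  rw [h]
  push_cast
  ring

open Finset in
lemma Fk : ∀ k i : ℕ,
    (∑ m ∈ range (k+1), (-1:ℤ)^m * (m.choose i) * (m.factorial) * (stirling (k+1) (m+1)))
      = (-1:ℤ)^k * (i.factorial) * stirling k i := by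
  intro k
  induction k with
  | zero =>
    intro i
    rcases i with _ | i
    · simp [stirling]
    · have h1 : stirling 0 (i+1) = 0 := rfl
      have h2 : Nat.choose 0 (i+1) = 0 := rfl
      simp [h1, h2, stirling]
  | succ k ih =>
    intro i
    have split : ∀ m ∈ range (k+2),
        (-1:ℤ)^m * (m.choose i) * m.factorial * (stirling (k+2) (m+1))
        = (-1:ℤ)^m * (m.choose i) * m.factorial * (((m:ℤ)+1) * stirling (k+1) (m+1))
          + (-1:ℤ)^m * (m.choose i) * m.factorial * (stirling (k+1) m) := by
      intro m _
      rw [stirling_succ]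
      push_cast
      ring
    rw [Finset.sum_congr rfl split, Finset.sum_add_distrib]
    have hA : (∑ m ∈ range (k+2),
          (-1:ℤ)^m * (m.choose i) * m.factorial * (((m:ℤ)+1) * stirling (k+1) (m+1)))
        = ∑ m ∈ range (k+1),
            (-1:ℤ)^m * (((m+1).factorial : ℕ) : ℤ) * stirling (k+1) (m+1) * (m.choose i) := by
      rw [Finset.sum_range_succ, stirling_zero_of_lt (k+1) (k+2) (by omega)]
      push_cast
      simp only [mul_zero, add_zero]
      apply Finset.sum_congr rfl
      intro m _
      rw [Nat.factorial_succ]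
      push_cast
      ring
    have hB : (∑ m ∈ range (k+2),
          (-1:ℤ)^m * (m.choose i) * m.factorial * (stirling (k+1) m))
        = ∑ m ∈ range (k+1),
            -((-1:ℤ)^m * (((m+1).factorial : ℕ) : ℤ) * stirling (k+1) (m+1) * (((m+1).choose i : ℕ) : ℤ)) := by
      rw [Finset.sum_range_succ']
      have h0 : stirling (k+1) 0 = 0 := rfl
      rw [h0]
      push_cast
      rw [mul_zero, add_zero]
      apply Finset.sum_congr rfl
      intro m _
      rw [pow_succ]
      push_cast
      ring
    rw [hA, hB, ← Finset.sum_add_distrib]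
    rcases i with _ | i
    · have hz : ∀ m ∈ range (k+1),
          (-1:ℤ)^m * (((m+1).factorial : ℕ) : ℤ) * stirling (k+1) (m+1) * (m.choose 0)
            + -((-1:ℤ)^m * (((m+1).factorial : ℕ) : ℤ) * stirling (k+1) (m+1) * (((m+1).choose 0 : ℕ) : ℤ)) = 0 := by
        intro m _
        simp
      rw [Finset.sum_congr rfl hz, Finset.sum_const_zero]
      have : stirling (k+1) 0 = 0 := rfl
      rw [this]
      simp
    · have hterm : ∀ m ∈ range (k+1),
          (-1:ℤ)^m * (((m+1).factorial : ℕ) : ℤ) * stirling (k+1) (m+1) * (m.choose (i+1))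
            + -((-1:ℤ)^m * (((m+1).factorial : ℕ) : ℤ) * stirling (k+1) (m+1) * (((m+1).choose (i+1) : ℕ) : ℤ))
          = -((i:ℤ)+1) * ((-1:ℤ)^m * (m.choose (i+1)) * m.factorial * stirling (k+1) (m+1)
              + (-1:ℤ)^m * (m.choose i) * m.factorial * stirling (k+1) (m+1)) := by
        intro m _
        have hc : (m+1) * m.choose i = (m.choose i + m.choose (i+1)) * (i+1) := by
          rw [Nat.add_one_mul_choose_eq, Nat.choose_succ_succ]
        have hcZ : ((m:ℤ)+1) * (m.choose i : ℤ)
            = ((m.choose i : ℤ) + (m.choose (i+1) : ℤ)) * ((i:ℤ)+1) := by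
          exact_mod_cast congrArg (Nat.cast : ℕ → ℤ) hc
        have hch : (((m+1).choose (i+1) : ℕ) : ℤ) = (m.choose i : ℤ) + (m.choose (i+1) : ℤ) := by
          rw [Nat.choose_succ_succ]
          push_cast
          ring
        rw [hch, Nat.factorial_succ]
        push_cast
        linear_combination (-((-1:ℤ)^m) * (m.factorial : ℤ) * (stirling (k+1) (m+1) : ℤ)) * hcZ
      rw [Finset.sum_congr rfl hterm, ← Finset.mul_sum, Finset.sum_add_distrib, ih (i+1), ih i]
      rw [stirling_succ, Nat.factorial_succ]
      push_cast
      ring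

open Finset in
lemma BD : ∀ m k a : ℕ, m ≤ k →
    (∑ x ∈ range (m+1), (-1:ℤ)^(m-x) * (m.choose x) * ((x+a).choose k))
      = ((a.choose (k-m) : ℕ) : ℤ) := by
  intro m
  induction m with
  | zero => intro k a _; simp
  | succ m ih =>
    intro k a hmk
    rw [Finset.sum_range_succ']
    have hsplit : ∀ x ∈ range (m+1),
        (-1:ℤ)^(m+1-(x+1)) * (((m+1).choose (x+1) : ℕ) : ℤ) * (((x+1+a).choose k : ℕ) : ℤ)
        = (-1:ℤ)^(m-x) * ((m.choose (x+1) : ℕ) : ℤ) * (((x+1+a).choose k : ℕ) : ℤ)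
          + (-1:ℤ)^(m-x) * ((m.choose x : ℕ) : ℤ) * (((x+(a+1)).choose k : ℕ) : ℤ) := by
      intro x _
      have e1 : m + 1 - (x+1) = m - x := by omega
      have e2 : x + 1 + a = x + (a+1) := by omega
      rw [e1, e2, Nat.choose_succ_succ]
      push_cast
      ring
    rw [Finset.sum_congr rfl hsplit, Finset.sum_add_distrib, ih k (a+1) (by omega)]
    have hU : (∑ x ∈ range (m+1),
          (-1:ℤ)^(m-x) * ((m.choose (x+1) : ℕ) : ℤ) * (((x+1+a).choose k : ℕ) : ℤ))
        = -(∑ x ∈ range (m+1), (-1:ℤ)^(m-x) * (m.choose x) * ((x+a).choose k))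
          + (-1:ℤ)^m * (a.choose k) := by
      rw [Finset.sum_range_succ]
      simp only [Nat.choose_succ_self, Nat.cast_zero, mul_zero, zero_mul, add_zero]
      rw [Finset.sum_range_succ' (fun x => (-1:ℤ)^(m-x) * (m.choose x) * ((x+a).choose k))]
      have hterm : ∀ x ∈ range m,
          (-1:ℤ)^(m-x) * ((m.choose (x+1) : ℕ) : ℤ) * (((x+1+a).choose k : ℕ) : ℤ)
          = -((-1:ℤ)^(m-(x+1)) * (((m.choose (x+1) : ℕ)) : ℤ) * ((((x+1)+a).choose k : ℕ) : ℤ)) := by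
        intro x hx
        simp only [mem_range] at hx
        have e : m - x = (m - (x+1)) + 1 := by omega
        rw [e, pow_succ]
        ring
      rw [Finset.sum_congr rfl hterm, Finset.sum_neg_distrib]
      simp only [Nat.sub_zero, Nat.choose_zero_right, Nat.cast_one, zero_add]
      ring
    rw [hU, ih k a (by omega)]
    have hp : ((a+1).choose (k-m) : ℤ) = (a.choose (k-m-1) : ℤ) + (a.choose (k-m) : ℤ) := by
      have e : k - m = (k - m - 1) + 1 := by omega
      rw [e, Nat.choose_succ_succ]
      push_cast
      ring
    have e2 : k - (m+1) = k - m - 1 := by omega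
    rw [e2, hp]
    simp only [Nat.add_sub_cancel, Nat.choose_zero_right]
    push_cast
    ring

def dInd (k : ℕ) (σ : Equiv.Perm (Fin k)) (q : ℕ) : ℕ :=
  if h : q + 1 < k then (if σ ⟨q+1, h⟩ < σ ⟨q, by omega⟩ then 1 else 0) else 0

open Finset in
lemma descent_card_eq (k : ℕ) (σ : Equiv.Perm (Fin k)) :
    (descentSet k σ).card = ∑ q ∈ range (k-1), dInd k σ q := by
  rw [descentSet, Finset.card_filter]
  rw [← Fin.sum_univ_eq_sum_range (fun q => dInd k σ q) (k-1)]
  apply Finset.sum_congr rfl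
  intro i _
  have h : i.1 + 1 < k := by have := i.isLt; omega
  simp only [dInd, dif_pos h]

def ins (k : ℕ) (p : Fin (k+1)) (σ : Equiv.Perm (Fin k)) : Equiv.Perm (Fin (k+1)) :=
  (finSuccEquiv' p).trans ((Equiv.optionCongr σ).trans (finSuccEquiv' (Fin.last k)).symm)

lemma ins_self (k : ℕ) (p : Fin (k+1)) (σ : Equiv.Perm (Fin k)) :
    ins k p σ p = Fin.last k := by
  simp [ins, finSuccEquiv'_at, finSuccEquiv'_symm_none]

lemma ins_succAbove (k : ℕ) (p : Fin (k+1)) (σ : Equiv.Perm (Fin k)) (i : Fin k) :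
    ins k p σ (p.succAbove i) = (σ i).castSucc := by
  simp [ins, finSuccEquiv'_succAbove, finSuccEquiv'_symm_some, Fin.succAbove_last]

lemma ins_lt (k : ℕ) (p : Fin (k+1)) (σ : Equiv.Perm (Fin k)) (q : ℕ) (hq : q < p.1) :
    ins k p σ ⟨q, by have := p.isLt; omega⟩
      = (σ ⟨q, by have := p.isLt; omega⟩).castSucc := by
  have hqk : q < k := by have := p.isLt; omega
  have he : (⟨q, by omega⟩ : Fin (k+1)) = p.succAbove ⟨q, hqk⟩ := by
    rw [Fin.succAbove_of_castSucc_lt]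
    · rfl
    · rw [Fin.lt_def]; exact hq
  rw [he, ins_succAbove]

lemma ins_gt (k : ℕ) (p : Fin (k+1)) (σ : Equiv.Perm (Fin k)) (q : ℕ)
    (h1 : p.1 < q) (h2 : q < k + 1) :
    ins k p σ ⟨q, h2⟩ = (σ ⟨q - 1, by omega⟩).castSucc := by
  have he : (⟨q, h2⟩ : Fin (k+1)) = p.succAbove ⟨q - 1, by omega⟩ := by
    rw [Fin.succAbove_of_le_castSucc]
    · apply Fin.ext; simp [Fin.succ_mk]; omega
    · rw [Fin.le_def]; simp; omega
  rw [he, ins_succAbove]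

lemma dInd_ins_lt (k : ℕ) (p : Fin (k+1)) (σ : Equiv.Perm (Fin k)) (q : ℕ)
    (hq : q + 1 < p.1) :
    dInd (k+1) (ins k p σ) q = dInd k σ q := by
  have hk : q + 1 < k := by have := p.isLt; omega
  rw [dInd, dInd, dif_pos (by omega : q + 1 < k + 1), dif_pos hk]
  rw [ins_lt k p σ (q+1) hq, ins_lt k p σ q (by omega)]
  simp [Fin.castSucc_lt_castSucc_iff]

lemma dInd_ins_pred (k : ℕ) (p : Fin (k+1)) (σ : Equiv.Perm (Fin k)) (hP : 1 ≤ p.1) :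
    dInd (k+1) (ins k p σ) (p.1 - 1) = 0 := by
  have hp1 : p.1 - 1 + 1 = p.1 := by omega
  rw [dInd, dif_pos (by have := p.isLt; omega : p.1 - 1 + 1 < k + 1)]
  have e1 : (⟨p.1 - 1 + 1, by have := p.isLt; omega⟩ : Fin (k+1)) = p := by
    apply Fin.ext; simp [hp1]
  rw [e1, ins_self, ins_lt k p σ (p.1-1) (by omega)]
  simp [Fin.lt_def]

lemma dInd_ins_self (k : ℕ) (p : Fin (k+1)) (σ : Equiv.Perm (Fin k)) (hP : p.1 < k) :
    dInd (k+1) (ins k p σ) p.1 = 1 := by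
  rw [dInd, dif_pos (by omega : p.1 + 1 < k + 1)]
  rw [ins_gt k p σ (p.1+1) (by omega) (by omega)]
  have e1 : (⟨p.1, by omega⟩ : Fin (k+1)) = p := Fin.ext rfl
  rw [e1, ins_self]
  simp [Fin.castSucc_lt_last]

lemma dInd_ins_gt (k : ℕ) (p : Fin (k+1)) (σ : Equiv.Perm (Fin k)) (q : ℕ)
    (h1 : p.1 < q + 1) (h2 : q + 1 + 1 < k + 1) :
    dInd (k+1) (ins k p σ) (q+1) = dInd k σ q := by
  rw [dInd, dInd, dif_pos h2, dif_pos (by omega : q + 1 < k)]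
  rw [ins_gt k p σ (q+1+1) (by omega) (by omega), ins_gt k p σ (q+1) (by omega) (by omega)]
  simp only [Fin.castSucc_lt_castSucc_iff, Nat.add_sub_cancel]

open Finset in
lemma card_ins_last (k : ℕ) (σ : Equiv.Perm (Fin k)) (hk : 1 ≤ k) :
    (descentSet (k+1) (ins k (Fin.last k) σ)).card = (descentSet k σ).card := by
  obtain ⟨k', rfl⟩ : ∃ k', k = k' + 1 := ⟨k - 1, by omega⟩
  rw [descent_card_eq, descent_card_eq]
  show (∑ q ∈ range (k'+1), dInd (k'+2) (ins (k'+1) (Fin.last (k'+1)) σ) q) = _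
  rw [Finset.sum_range_succ]
  have htop : dInd (k'+2) (ins (k'+1) (Fin.last (k'+1)) σ) k' = 0 := by
    rw [dInd, dif_pos (by omega : k' + 1 < k' + 2)]
    have e1 : (⟨k'+1, by omega⟩ : Fin (k'+2)) = Fin.last (k'+1) := by
      apply Fin.ext; rfl
    rw [e1, ins_self, ins_lt (k'+1) (Fin.last (k'+1)) σ k' (by simp [Fin.last])]
    simp [Fin.not_lt.mpr (Fin.le_last _)]
  rw [htop, add_zero]
  apply Finset.sum_congr rfl
  intro q hq
  simp only [mem_range] at hq
  exact dInd_ins_lt (k'+1) (Fin.last (k'+1)) σ q (by simp [Fin.last]; omega)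

open Finset in
lemma card_ins_mid (k : ℕ) (σ : Equiv.Perm (Fin k)) (p : Fin (k+1)) (hP : p.1 < k) :
    (descentSet (k+1) (ins k p σ)).card
        + (if 1 ≤ p.1 then dInd k σ (p.1 - 1) else 0)
      = (∑ q ∈ range (k-1), dInd k σ q) + 1 := by
  obtain ⟨k', rfl⟩ : ∃ k', k = k' + 1 := ⟨k - 1, by omega⟩
  have hcard : (descentSet (k'+1+1) (ins (k'+1) p σ)).card
      = ∑ q ∈ range (k'+1), dInd (k'+1+1) (ins (k'+1) p σ) q := descent_card_eq (k'+1+1) _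
  rcases Nat.eq_zero_or_pos p.1 with h0 | h1
  · rw [hcard, if_neg (by omega), add_zero, Finset.sum_range_succ']
    have hbot : dInd (k'+1+1) (ins (k'+1) p σ) 0 = 1 := by
      have := dInd_ins_self (k'+1) p σ hP
      rwa [h0] at this
    have hrest : ∀ q ∈ range k',
        dInd (k'+1+1) (ins (k'+1) p σ) (q+1) = dInd (k'+1) σ q := by
      intro q hq
      simp only [mem_range] at hq
      exact dInd_ins_gt (k'+1) p σ q (by omega) (by omega)
    rw [hbot, Finset.sum_congr rfl hrest]
    simp
  · obtain ⟨P', hp⟩ : ∃ P', p.1 = P' + 1 := ⟨p.1 - 1, by omega⟩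
    rw [hcard, if_pos (show 1 ≤ p.1 from h1)]
    rw [Finset.range_eq_Ico,
      ← Finset.sum_Ico_consecutive (fun q => dInd (k'+1+1) (ins (k'+1) p σ) q)
        (Nat.zero_le (P'+1)) (by omega : P' + 1 ≤ k' + 1)]
    have hfirst : (∑ q ∈ Finset.Ico 0 (P'+1), dInd (k'+1+1) (ins (k'+1) p σ) q)
        = ∑ q ∈ range P', dInd (k'+1) σ q := by
      rw [← Finset.range_eq_Ico, Finset.sum_range_succ]
      have hF : dInd (k'+1+1) (ins (k'+1) p σ) P' = 0 := by
        have := dInd_ins_pred (k'+1) p σ h1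
        rwa [show p.1 - 1 = P' from by omega] at this
      rw [hF, add_zero]
      apply Finset.sum_congr rfl
      intro q hq
      simp only [mem_range] at hq
      exact dInd_ins_lt (k'+1) p σ q (by omega)
    have hsecond : (∑ q ∈ Finset.Ico (P'+1) (k'+1), dInd (k'+1+1) (ins (k'+1) p σ) q)
        = 1 + ∑ q ∈ Finset.Ico (P'+1) k', dInd (k'+1) σ q := by
      rcases Nat.lt_or_ge P' k' with hPk | hPk
      · rw [Finset.sum_eq_sum_Ico_succ_bot (by omega : P' + 1 < k' + 1)]
        have hself : dInd (k'+1+1) (ins (k'+1) p σ) (P'+1) = 1 := by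
          have := dInd_ins_self (k'+1) p σ hP
          rwa [hp] at this
        rw [hself]
        congr 1
        rw [Finset.sum_Ico_eq_sum_range, Finset.sum_Ico_eq_sum_range]
        rw [show k' - (P'+1) = k' + 1 - (P'+1+1) from by omega]
        apply Finset.sum_congr rfl
        intro q hq
        simp only [mem_range] at hq
        have := dInd_ins_gt (k'+1) p σ (P' + 1 + q) (by omega) (by omega)
        rw [show P' + 1 + 1 + q = P' + 1 + q + 1 from by omega, this]
      · -- P' ≥ k' : impossible since p.1 = P'+1 < k'+1
        omega
    rw [hfirst, hsecond]
    have hrhs : (∑ q ∈ Finset.Ico 0 (k' + 1 - 1), dInd (k'+1) σ q)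
        = (∑ q ∈ range P', dInd (k'+1) σ q) + dInd (k'+1) σ P'
          + ∑ q ∈ Finset.Ico (P'+1) k', dInd (k'+1) σ q := by
      rw [← Finset.range_eq_Ico, show k' + 1 - 1 = k' from rfl, Finset.range_eq_Ico,
        ← Finset.sum_Ico_consecutive (fun q => dInd (k'+1) σ q)
          (Nat.zero_le P') (by omega : P' ≤ k'),
        Finset.sum_eq_sum_Ico_succ_bot (by omega : P' < k'),
        ← Finset.range_eq_Ico]
      ring
    rw [← Finset.range_eq_Ico] at hrhs
    rw [hrhs, show p.1 - 1 = P' from by omega]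
    omega

lemma dInd_le_one (k : ℕ) (σ : Equiv.Perm (Fin k)) (q : ℕ) : dInd k σ q ≤ 1 := by
  rw [dInd]
  split
  · split <;> omega
  · omega

lemma ins_injective (k : ℕ) :
    Function.Injective (fun x : Fin (k+1) × Equiv.Perm (Fin k) => ins k x.1 x.2) := by
  rintro ⟨p, σ⟩ ⟨p', σ'⟩ h
  simp only at h
  have hp : p = p' := by
    by_contra hne
    obtain ⟨i, hi⟩ := Fin.exists_succAbove_eq hne
    have h2 : ins k p σ p = ins k p' σ' p := by rw [h]
    rw [ins_self, ← hi, ins_succAbove] at h2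
    exact absurd h2.symm (ne_of_lt (Fin.castSucc_lt_last _))
  subst hp
  have hσ : σ = σ' := by
    apply Equiv.ext
    intro i
    have h2 : ins k p σ (p.succAbove i) = ins k p σ' (p.succAbove i) := by rw [h]
    rw [ins_succAbove, ins_succAbove] at h2
    exact Fin.castSucc_injective k h2
  rw [hσ]

lemma ins_bijective (k : ℕ) :
    Function.Bijective (fun x : Fin (k+1) × Equiv.Perm (Fin k) => ins k x.1 x.2) := by
  rw [Fintype.bijective_iff_injective_and_card]
  refine ⟨ins_injective k, ?_⟩
  simp [Fintype.card_perm, Nat.factorial_succ]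

open Finset in
lemma eulerian_succ (k j : ℕ) (hk : 1 ≤ k) :
    eulerian (k+1) (j+1) = (j+1) * eulerian k (j+1) + (k+1-j) * eulerian k j := by
  have htrans : eulerian (k+1) (j+1)
      = (univ.filter (fun x : Fin (k+1) × Equiv.Perm (Fin k) =>
          (descentSet (k+1) (ins k x.1 x.2)).card + 1 = j+1)).card := by
    rw [eulerian]
    apply Finset.card_bij (fun (π : Equiv.Perm (Fin (k+1))) _ =>
      ((Equiv.ofBijective _ (ins_bijective k)).symm π))
    · intro π hπ
      simp only [mem_filter, mem_univ, true_and] at hπ ⊢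
      have : ins k ((Equiv.ofBijective _ (ins_bijective k)).symm π).1
          ((Equiv.ofBijective _ (ins_bijective k)).symm π).2 = π := by
        have := Equiv.apply_symm_apply (Equiv.ofBijective _ (ins_bijective k)) π
        exact this
      rw [this]
      exact hπ
    · intro a _ b _ hab
      exact (Equiv.ofBijective _ (ins_bijective k)).symm.injective hab
    · intro x hx
      refine ⟨ins k x.1 x.2, ?_, ?_⟩
      · simp only [mem_filter, mem_univ, true_and] at hx ⊢
        exact hx
      · exact Equiv.symm_apply_apply (Equiv.ofBijective _ (ins_bijective k)) x
  rw [htrans, Finset.card_filter]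
  rw [Fintype.sum_prod_type]
  rw [Finset.sum_comm]
  have hinner : ∀ σ : Equiv.Perm (Fin k),
      (∑ p : Fin (k+1), if (descentSet (k+1) (ins k p σ)).card + 1 = j+1 then 1 else 0)
      = (if (descentSet k σ).card = j then 1 else 0) * ((descentSet k σ).card + 1)
        + (if (descentSet k σ).card + 1 = j then 1 else 0) * (k - (descentSet k σ).card) := by
    intro σ
    set d := (descentSet k σ).card with hd
    set a : ℕ := if d = j then 1 else 0 with ha
    set b : ℕ := if d + 1 = j then 1 else 0 with hb
    have hD : d = ∑ q ∈ range (k-1), dInd k σ q := descent_card_eq k σ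
    -- convert p-sum to range-sum
    set f : ℕ → ℕ := fun P => if hPk : P < k + 1 then
        (if (descentSet (k+1) (ins k ⟨P, hPk⟩ σ)).card + 1 = j+1 then 1 else 0) else 0 with hf
    have h1 : (∑ p : Fin (k+1), if (descentSet (k+1) (ins k p σ)).card + 1 = j+1 then 1 else 0)
        = ∑ P ∈ range (k+1), f P := by
      rw [← Fin.sum_univ_eq_sum_range f (k+1)]
      apply Finset.sum_congr rfl
      intro p _
      rw [hf]
      simp only [dif_pos p.isLt, Fin.eta]
    rw [h1, Finset.sum_range_succ]
    -- top term: p = last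
    have htop : f k = a := by
      rw [hf]
      simp only [dif_pos (by omega : k < k + 1)]
      have : (⟨k, by omega⟩ : Fin (k+1)) = Fin.last k := rfl
      rw [this, card_ins_last k σ hk, ← hd, ha]
      simp only [Nat.add_right_cancel_iff]
    rw [htop]
    -- middle terms
    have hmid : ∀ P ∈ range k, f P
        = (if (if 1 ≤ P then dInd k σ (P - 1) else 0) = 1 then a else b) := by
      intro P hP
      simp only [mem_range] at hP
      have hPk1 : P < k + 1 := by omega
      set p : Fin (k+1) := ⟨P, hPk1⟩ with hpdef
      have hfp : f P = if (descentSet (k+1) (ins k p σ)).card + 1 = j + 1 then 1 else 0 := by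
        rw [hf]
        simp only [dif_pos hPk1]
        rfl
      have hkey := card_ins_mid k σ p (show p.1 < k from hP)
      rw [show p.1 = P from rfl, ← hD] at hkey
      rw [hfp]
      have hsle : (if 1 ≤ P then dInd k σ (P - 1) else 0) ≤ 1 := by
        split
        · exact dInd_le_one k σ _
        · omega
      rcases Nat.lt_or_ge (if 1 ≤ P then dInd k σ (P - 1) else 0) 1 with hs | hs
      · have hs0 : (if 1 ≤ P then dInd k σ (P - 1) else 0) = 0 := by omega
        have hc : (descentSet (k+1) (ins k p σ)).card = d + 1 := by omega
        rw [hc, hs0, if_neg (by decide : ¬ (0:ℕ) = 1), hb]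
        exact if_congr (by omega) rfl rfl
      · have hs1 : (if 1 ≤ P then dInd k σ (P - 1) else 0) = 1 := by omega
        have hc : (descentSet (k+1) (ins k p σ)).card = d := by omega
        rw [hc, hs1, if_pos rfl, ha]
        exact if_congr (by omega) rfl rfl
    rw [Finset.sum_congr rfl hmid]
    -- peel bottom P = 0, shift
    obtain ⟨k', rfl⟩ : ∃ k', k = k' + 1 := ⟨k - 1, by omega⟩
    rw [Finset.sum_range_succ']
    simp only [if_neg (by omega : ¬ (1 ≤ 0))]
    have hshift : ∀ q ∈ range k',
        (if (if 1 ≤ q + 1 then dInd (k'+1) σ (q + 1 - 1) else 0) = 1 then a else b)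
        = (if dInd (k'+1) σ q = 1 then a else b) := by
      intro q _
      rw [if_pos (by omega : 1 ≤ q + 1)]
      rfl
    rw [Finset.sum_congr rfl hshift]
    rw [Finset.sum_ite, Finset.sum_const, Finset.sum_const]
    have hc1 : ((range k').filter (fun q => dInd (k'+1) σ q = 1)).card = d := by
      rw [hD]
      show _ = ∑ q ∈ range (k'+1-1), dInd (k'+1) σ q
      rw [show k' + 1 - 1 = k' from rfl, Finset.card_filter]
      apply Finset.sum_congr rfl
      intro q _
      have := dInd_le_one (k'+1) σ q
      interval_cases h : dInd (k'+1) σ q <;> simp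
    have hc0 : ((range k').filter (fun q => ¬ dInd (k'+1) σ q = 1)).card = k' - d := by
      have := Finset.card_filter_add_card_filter_not
        (s := range k') (p := fun q => dInd (k'+1) σ q = 1)
      rw [hc1] at this
      simp only [Finset.card_range] at this
      omega
    rw [hc1, hc0]
    have hdk : d ≤ k' := by
      have := hc1
      have h2 := Finset.card_filter_le (range k') (fun q => dInd (k'+1) σ q = 1)
      simp only [Finset.card_range] at h2
      omega
    simp only [smul_eq_mul]
    simp only [if_neg (by decide : ¬ (0:ℕ) = 1)]
    have he : k' + 1 - d = (k' - d) + 1 := by omega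
    rw [he]
    ring
  rw [Finset.sum_congr rfl (fun σ _ => hinner σ)]
  rw [Finset.sum_add_distrib]
  have hA : (∑ σ : Equiv.Perm (Fin k),
      (if (descentSet k σ).card = j then 1 else 0) * ((descentSet k σ).card + 1))
      = (j+1) * eulerian k (j+1) := by
    rw [eulerian, Finset.card_filter, Finset.mul_sum]
    apply Finset.sum_congr rfl
    intro σ _
    rcases eq_or_ne ((descentSet k σ).card) j with h | h
    · rw [if_pos h, if_pos (by omega), h]
      ring
    · rw [if_neg h, if_neg (by omega)]
      ring
  have hB : (∑ σ : Equiv.Perm (Fin k),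
      (if (descentSet k σ).card + 1 = j then 1 else 0) * (k - (descentSet k σ).card))
      = (k+1-j) * eulerian k j := by
    rw [eulerian, Finset.card_filter, Finset.mul_sum]
    apply Finset.sum_congr rfl
    intro σ _
    rcases eq_or_ne ((descentSet k σ).card + 1) j with h | h
    · rw [if_pos h]
      have hdk : (descentSet k σ).card ≤ k - 1 := by
        have := Finset.card_filter_le (Finset.univ : Finset (Fin (k-1)))
          (fun i => σ ⟨i.1 + 1, by have := i.isLt; omega⟩ < σ ⟨i.1, by have := i.isLt; omega⟩)
        simp only [Finset.card_univ, Fintype.card_fin] at this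
        exact this
      omega
    · rw [if_neg h]
      ring
  rw [hA, hB]

lemma eulerian_zero (k : ℕ) : eulerian k 0 = 0 := by
  rw [eulerian]
  simp

open Finset in
lemma eulerian_gt (k j : ℕ) (hk : 1 ≤ k) (hj : k < j) : eulerian k j = 0 := by
  rw [eulerian, Finset.card_eq_zero, Finset.filter_eq_empty_iff]
  intro σ _
  have hdk : (descentSet k σ).card ≤ k - 1 := by
    have h2 := Finset.card_filter_le (Finset.univ : Finset (Fin (k-1)))
      (fun i => σ ⟨i.1 + 1, by have := i.isLt; omega⟩ < σ ⟨i.1, by have := i.isLt; omega⟩)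
    simp only [Finset.card_univ, Fintype.card_fin] at h2
    exact h2
  omega

lemma eulerian_one_one : eulerian 1 1 = 1 := by
  rw [eulerian]
  have h : ∀ π : Equiv.Perm (Fin 1), (descentSet 1 π).card + 1 = 1 := by
    intro π
    have : descentSet 1 π = ∅ :=
      Finset.eq_empty_of_forall_notMem (fun i _ => (Nat.not_lt_zero i.1 i.isLt).elim)
    rw [this]
    simp
  rw [Finset.filter_true_of_mem (fun π _ => h π)]
  simp [Finset.card_univ, Fintype.card_perm]

lemma TI (x k j : ℕ) (hj : j ≤ k) :
    (x:ℤ) * (((x + (k - j)).choose k : ℕ) : ℤ)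
      = (j : ℤ) * (((x + (k + 1 - j)).choose (k+1) : ℕ) : ℤ)
        + ((k + 1 - j : ℕ) : ℤ) * (((x + (k - j)).choose (k+1) : ℕ) : ℤ) := by
  have e1 : x + (k + 1 - j) = (x + (k - j)) + 1 := by omega
  rw [e1]
  set a := x + (k - j) with ha
  rcases Nat.lt_or_ge x j with hx | hx
  · have h1 : a < k := by omega
    rw [Nat.choose_eq_zero_of_lt h1, Nat.choose_eq_zero_of_lt (by omega : a + 1 < k + 1),
      Nat.choose_eq_zero_of_lt (by omega : a < k + 1)]
    simp
  · have hak : k ≤ a := by omega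
    have key1 : (a.choose (k+1) : ℤ) * (k+1) = (a.choose k : ℤ) * ((x : ℤ) - j) := by
      have h := Nat.choose_succ_right_eq a k
      have he : a - k = x - j := by omega
      have : (a.choose (k+1) : ℤ) * (k+1) = (a.choose k : ℤ) * ((a - k : ℕ) : ℤ) := by
        exact_mod_cast congrArg (Nat.cast : ℕ → ℤ) h
      rw [this, he, Int.ofNat_sub hx]
    have key2 : ((a+1).choose (k+1) : ℤ) = (a.choose k : ℤ) + (a.choose (k+1) : ℤ) := by
      have := Nat.choose_succ_succ a k
      exact_mod_cast congrArg (Nat.cast : ℕ → ℤ) this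
    have hc : ((k + 1 - j : ℕ) : ℤ) = (k : ℤ) + 1 - j := by
      rw [Int.ofNat_sub (by omega : j ≤ k + 1)]
      push_cast
      ring
    rw [key2, hc]
    linear_combination (-1 : ℤ) * key1

open Finset in
lemma worpitzky : ∀ k, 1 ≤ k → ∀ x : ℕ,
    (x:ℤ)^k = ∑ j ∈ range (k+1),
      (eulerian k j : ℤ) * (((x + (k - j)).choose k : ℕ) : ℤ) := by
  intro k
  induction k with
  | zero => omega
  | succ k ih =>
    intro _ x
    rcases Nat.eq_zero_or_pos k with rfl | hk
    · rw [Finset.sum_range_succ, Finset.sum_range_succ, Finset.sum_range_zero]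
      simp [eulerian_zero, eulerian_one_one, Nat.choose_one_right]
    -- step
    have hER : ∀ j, (eulerian (k+1) (j+1) : ℤ)
        = (j+1) * eulerian k (j+1) + ((k+1-j : ℕ) : ℤ) * eulerian k j := by
      intro j
      have := eulerian_succ k j hk
      exact_mod_cast congrArg (Nat.cast : ℕ → ℤ) this
    -- peel bottom j = 0
    rw [Finset.sum_range_succ']
    rw [eulerian_zero]
    simp only [Nat.cast_zero, zero_mul, add_zero]
    have hstep : ∀ j ∈ range (k+1),
        (eulerian (k+1) (j+1) : ℤ) * (((x + (k + 1 - (j+1))).choose (k+1) : ℕ) : ℤ)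
        = ((j:ℤ)+1) * (eulerian k (j+1) : ℤ) * (((x + (k - j)).choose (k+1) : ℕ) : ℤ)
          + (eulerian k j : ℤ) *
            (((k+1-j : ℕ) : ℤ) * (((x + (k - j)).choose (k+1) : ℕ) : ℤ)) := by
      intro j _
      rw [show k + 1 - (j+1) = k - j from by omega, hER j]
      push_cast
      ring
    rw [Finset.sum_congr rfl hstep, Finset.sum_add_distrib]
    -- first sum reindex
    have hfirst : (∑ j ∈ range (k+1),
          ((j:ℤ)+1) * (eulerian k (j+1) : ℤ) * (((x + (k - j)).choose (k+1) : ℕ) : ℤ))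
        = ∑ j ∈ range (k+1),
            (eulerian k j : ℤ) * ((j:ℤ) * (((x + (k + 1 - j)).choose (k+1) : ℕ) : ℤ)) := by
      have h2 := Finset.sum_range_succ'
        (fun j => (j:ℤ) * (eulerian k j : ℤ) * (((x + (k + 1 - j)).choose (k+1) : ℕ) : ℤ)) (k+1)
      have h3 := Finset.sum_range_succ
        (fun j => (j:ℤ) * (eulerian k j : ℤ) * (((x + (k + 1 - j)).choose (k+1) : ℕ) : ℤ)) (k+1)
      rw [eulerian_gt k (k+1) hk (by omega)] at h3
      simp only [Nat.cast_zero, zero_mul, mul_zero, add_zero] at h2 h3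
      have h4 : ∀ j ∈ range (k+1),
          ((j:ℤ)+1) * (eulerian k (j+1) : ℤ) * (((x + (k - j)).choose (k+1) : ℕ) : ℤ)
          = (((j+1 : ℕ)):ℤ) * (eulerian k (j+1) : ℤ) * (((x + (k + 1 - (j+1))).choose (k+1) : ℕ) : ℤ) := by
        intro j _
        rw [show k + 1 - (j+1) = k - j from by omega]
        push_cast
        ring
      rw [Finset.sum_congr rfl h4, ← h2, h3]
      apply Finset.sum_congr rfl
      intro j _
      ring
    rw [hfirst, ← Finset.sum_add_distrib]
    have hmerge : ∀ j ∈ range (k+1),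
        (eulerian k j : ℤ) * ((j:ℤ) * (((x + (k + 1 - j)).choose (k+1) : ℕ) : ℤ))
          + (eulerian k j : ℤ) *
            (((k+1-j : ℕ) : ℤ) * (((x + (k - j)).choose (k+1) : ℕ) : ℤ))
        = (eulerian k j : ℤ) * ((x:ℤ) * (((x + (k - j)).choose k : ℕ) : ℤ)) := by
      intro j hj
      simp only [mem_range] at hj
      rw [← mul_add, ← TI x k j (by omega)]
    rw [Finset.sum_congr rfl hmerge]
    have : (∑ j ∈ range (k+1), (eulerian k j : ℤ) * ((x:ℤ) * (((x + (k - j)).choose k : ℕ) : ℤ)))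
        = (x:ℤ) * ∑ j ∈ range (k+1), (eulerian k j : ℤ) * (((x + (k - j)).choose k : ℕ) : ℤ) := by
      rw [Finset.mul_sum]
      apply Finset.sum_congr rfl
      intro j _
      ring
    rw [this, ← ih hk x, pow_succ]
    ring

open Finset in
lemma starstar (k i : ℕ) (hk : 1 ≤ k) (hik : i ≤ k) :
    (i.factorial : ℤ) * stirling k i
      = ∑ j ∈ range (k+1), (eulerian k j : ℤ) * (((k-j).choose (k-i) : ℕ) : ℤ) := by
  rw [← surj_formula k i]
  have hW : ∀ t ∈ range (i+1), (-1:ℤ)^t * (i.choose t) * ((i-t : ℕ):ℤ)^k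
      = ∑ j ∈ range (k+1),
          (eulerian k j : ℤ) *
            ((-1:ℤ)^t * (i.choose t) * ((((i-t) + (k - j)).choose k : ℕ) : ℤ)) := by
    intro t _
    rw [worpitzky k hk (i-t), Finset.mul_sum]
    apply Finset.sum_congr rfl
    intro j _
    ring
  rw [Finset.sum_congr rfl hW, Finset.sum_comm]
  apply Finset.sum_congr rfl
  intro j hj
  rw [← Finset.mul_sum]
  congr 1
  have hBD := BD i k (k-j) hik
  rw [← Finset.sum_range_reflect] at hBD
  rw [← hBD]
  apply Finset.sum_congr rfl
  intro t ht
  simp only [mem_range] at ht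
  rw [show i + 1 - 1 - t = i - t from by omega]
  rw [show i - (i - t) = t from by omega, Nat.choose_symm (by omega : t ≤ i)]

lemma neg_one_pow_sub (m i : ℕ) (h : i ≤ m) : (-1:ℤ)^(m-i) = (-1)^m * (-1)^i := by
  have h2 : ((-1:ℤ)^i) * ((-1:ℤ)^i) = 1 := by
    rw [← pow_add]
    exact Even.neg_one_pow ⟨i, rfl⟩
  calc (-1:ℤ)^(m-i) = (-1)^(m-i) * ((-1)^i * (-1)^i) := by rw [h2, mul_one]
    _ = ((-1)^(m-i) * (-1)^i) * (-1)^i := by ring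
    _ = (-1)^m * (-1)^i := by rw [← pow_add, show m - i + i = m from by omega]

open Finset in
theorem polyBernoulli_eq_eulerian_incl_excl' (n k : ℕ) (hn : 0 < n) (hk : 0 < k) :
    (∑ m ∈ Finset.range (min n k + 1),
        ((Nat.factorial m) ^ 2 * stirling (n + 1) (m + 1) * stirling (k + 1) (m + 1) : ℤ)) =
      ∑ j ∈ Finset.range (k + 1), (eulerian k j : ℤ) *
        ∑ m ∈ Finset.range (k - j + 1),
          (-1 : ℤ) ^ m * Nat.choose (k - j) m * ((k + 1 - m : ℕ) : ℤ) ^ n := by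
  -- Step 0: extend range to k+1
  have hext : (∑ m ∈ Finset.range (min n k + 1),
        ((Nat.factorial m : ℤ) ^ 2 * stirling (n + 1) (m + 1) * stirling (k + 1) (m + 1)))
      = ∑ m ∈ range (k+1),
        ((Nat.factorial m : ℤ) ^ 2 * stirling (n + 1) (m + 1) * stirling (k + 1) (m + 1)) := by
    apply Finset.sum_subset
    · apply Finset.range_subset_range.mpr
      omega
    · intro m hm hnot
      simp only [mem_range] at hm hnot
      rw [stirling_zero_of_lt (n+1) (m+1) (by omega)]
      push_cast
      ring
  rw [hext]
  -- Step 1: expand via surj1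
  have hA1 : ∀ m ∈ range (k+1),
      ((Nat.factorial m : ℤ) ^ 2 * stirling (n + 1) (m + 1) * stirling (k + 1) (m + 1))
      = ∑ i ∈ range (k+1),
          (-1:ℤ)^(m-i) * (m.choose i) * ((i+1 : ℕ):ℤ)^n
            * ((m.factorial : ℤ) * stirling (k+1) (m+1)) := by
    intro m _
    have hsub : (∑ i ∈ range (m+1),
          (-1:ℤ)^(m-i) * (m.choose i) * ((i+1 : ℕ):ℤ)^n
            * ((m.factorial : ℤ) * stirling (k+1) (m+1)))
        = ∑ i ∈ range (k+1),
          (-1:ℤ)^(m-i) * (m.choose i) * ((i+1 : ℕ):ℤ)^n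
            * ((m.factorial : ℤ) * stirling (k+1) (m+1)) := by
      apply Finset.sum_subset
      · apply Finset.range_subset_range.mpr
        simp only [mem_range] at *
        omega
      · intro i hi hnot
        simp only [mem_range] at hi hnot
        rw [Nat.choose_eq_zero_of_lt (by omega : m < i)]
        push_cast
        ring
    rw [← hsub, ← Finset.sum_mul, ← surj1 n m]
    ring
  rw [Finset.sum_congr rfl hA1, Finset.sum_comm]
  -- Step 2: inner sum via Fk
  have hA3 : ∀ i ∈ range (k+1),
      (∑ m ∈ range (k+1),
        (-1:ℤ)^(m-i) * (m.choose i) * ((i+1 : ℕ):ℤ)^n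
          * ((m.factorial : ℤ) * stirling (k+1) (m+1)))
      = (-1:ℤ)^i * (-1:ℤ)^k * ((i+1 : ℕ):ℤ)^n * ((i.factorial : ℤ) * stirling k i) := by
    intro i _
    have hterm : ∀ m ∈ range (k+1),
        (-1:ℤ)^(m-i) * (m.choose i) * ((i+1 : ℕ):ℤ)^n
          * ((m.factorial : ℤ) * stirling (k+1) (m+1))
        = ((-1:ℤ)^i * ((i+1 : ℕ):ℤ)^n)
            * ((-1:ℤ)^m * (m.choose i) * (m.factorial : ℤ) * stirling (k+1) (m+1)) := by
      intro m _
      rcases le_or_gt i m with h | h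
      · rw [neg_one_pow_sub m i h]
        ring
      · rw [Nat.choose_eq_zero_of_lt h]
        push_cast
        ring
    rw [Finset.sum_congr rfl hterm, ← Finset.mul_sum, Fk k i]
    ring
  rw [Finset.sum_congr rfl hA3]
  -- Step 3: starstar + swap
  have hB1 : ∀ i ∈ range (k+1),
      (-1:ℤ)^i * (-1:ℤ)^k * ((i+1 : ℕ):ℤ)^n * ((i.factorial : ℤ) * stirling k i)
      = ∑ j ∈ range (k+1), (eulerian k j : ℤ) *
          ((-1:ℤ)^i * (-1:ℤ)^k * ((i+1 : ℕ):ℤ)^n * (((k-j).choose (k-i) : ℕ) : ℤ)) := by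
    intro i hi
    simp only [mem_range] at hi
    rw [starstar k i hk (by omega), Finset.mul_sum]
    apply Finset.sum_congr rfl
    intro j _
    ring
  rw [Finset.sum_congr rfl hB1, Finset.sum_comm]
  apply Finset.sum_congr rfl
  intro j hj
  simp only [mem_range] at hj
  rw [← Finset.mul_sum]
  congr 1
  -- Step 4: reflect the i-sum
  have hrefl := Finset.sum_range_reflect
    (fun i => (-1:ℤ)^i * (-1:ℤ)^k * ((i+1 : ℕ):ℤ)^n * (((k-j).choose (k-i) : ℕ) : ℤ)) (k+1)
  rw [← hrefl]
  have hterm2 : ∀ i ∈ range (k+1),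
      (-1:ℤ)^(k+1-1-i) * (-1:ℤ)^k * (((k+1-1-i)+1 : ℕ):ℤ)^n
          * (((k-j).choose (k-(k+1-1-i)) : ℕ) : ℤ)
      = (-1:ℤ)^i * ((k-j).choose i : ℕ) * ((k + 1 - i : ℕ) : ℤ)^n := by
    intro i hi
    simp only [mem_range] at hi
    rw [show k + 1 - 1 - i = k - i from by omega]
    rw [show k - (k - i) = i from by omega]
    rw [show (k - i) + 1 = k + 1 - i from by omega]
    rw [neg_one_pow_sub k i (by omega)]
    have h2 : ((-1:ℤ)^k) * ((-1:ℤ)^k) = 1 := by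
      rw [← pow_add]
      exact Even.neg_one_pow ⟨k, rfl⟩
    calc (-1:ℤ)^k * (-1:ℤ)^i * (-1:ℤ)^k * ((k + 1 - i : ℕ):ℤ)^n * (((k-j).choose i : ℕ) : ℤ)
        = ((-1:ℤ)^k * (-1:ℤ)^k) * ((-1:ℤ)^i * (((k-j).choose i : ℕ) : ℤ) * ((k + 1 - i : ℕ):ℤ)^n) := by
          ring
      _ = (-1:ℤ)^i * ((k-j).choose i : ℕ) * ((k + 1 - i : ℕ) : ℤ)^n := by
          rw [h2]
          ring
  rw [Finset.sum_congr rfl hterm2]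
  -- Step 5: truncate to range (k-j+1)
  symm
  apply Finset.sum_subset
  · apply Finset.range_subset_range.mpr
    omega
  · intro i hi hnot
    simp only [mem_range] at hi hnot
    rw [Nat.choose_eq_zero_of_lt (by omega : k - j < i)]
    push_cast
    ring
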